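/- Ramanujan's theta function identity: ∑_{n≥0} q^{n(n+1)/2} = ∏_{n≥1} (1 - q^{2n})^2 / ∏_{n≥1} (1 - q^n) as formal power series in ℤ[[q]]. -/

import Mathlib

open PowerSeries Finset

noncomputable section

abbrev R := PowerSeries ℤ
abbrev XX : R := PowerSeries.X

/-- partial product ∏_{n=1}^{r} (1 - X^{δ n}) -/
def Pa (δ r : ℕ) : R := ∏ n ∈ Finset.Icc 1 r, (1 - XX ^ (δ * n))

/-- partial product ∏_{n=1}^{r} (1 + X^{δ n}) -/
def Na (δ r : ℕ) : R := ∏ n ∈ Finset.Icc 1 r, (1 + XX ^ (δ * n))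

/-- Gaussian binomial (in q = X²) as a power series. -/
def qb : ℕ → ℕ → R
  | _, 0 => 1
  | 0, _ + 1 => 0
  | n + 1, k + 1 => qb n k + XX ^ (2 * (k + 1)) * qb n (k + 1)

@[simp] lemma qb_zero (n : ℕ) : qb n 0 = 1 := by cases n <;> rfl

lemma qb_succ_succ (n k : ℕ) :
    qb (n + 1) (k + 1) = qb n k + XX ^ (2 * (k + 1)) * qb n (k + 1) := rfl

lemma qb_overflow : ∀ n k : ℕ, n < k → qb n k = 0 := by
  intro n
  induction n with
  | zero => intro k hk; obtain ⟨j, rfl⟩ := Nat.exists_eq_add_of_lt hk; rfl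
  | succ n ih =>
    intro k hk
    obtain ⟨j, rfl⟩ : ∃ j, k = (n + j + 1) + 1 := by
      refine ⟨k - n - 2, by omega⟩
    have h1 : qb n (n + j + 1) = 0 := ih _ (by omega)
    have h2 : qb n (n + j + 2) = 0 := ih _ (by omega)
    rw [qb_succ_succ]
    simp [h1, h2]

@[simp] lemma qb_diag : ∀ n : ℕ, qb n n = 1 := by
  intro n
  induction n with
  | zero => rfl
  | succ n ih =>
    rw [qb_succ_succ, ih, qb_overflow n (n+1) (by omega)]
    simp

@[simp] lemma Pa_zero (δ : ℕ) : Pa δ 0 = 1 := by simp [Pa]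

lemma Pa_succ (δ r : ℕ) : Pa δ (r + 1) = Pa δ r * (1 - XX ^ (δ * (r + 1))) := by
  unfold Pa
  rw [Finset.prod_Icc_succ_top (by omega)]

lemma Na_succ (δ r : ℕ) : Na δ (r + 1) = Na δ r * (1 + XX ^ (δ * (r + 1))) := by
  unfold Na
  rw [Finset.prod_Icc_succ_top (by omega)]

lemma Na_zero (δ : ℕ) : Na δ 0 = 1 := by simp [Na]

lemma constantCoeff_Pa (δ r : ℕ) (hδ : 1 ≤ δ) : constantCoeff (R := ℤ) (Pa δ r) = 1 := by
  unfold Pa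
  rw [map_prod]
  refine Finset.prod_eq_one fun n hn => ?_
  have hn1 : 1 ≤ n := (Finset.mem_Icc.1 hn).1
  rw [map_sub, map_one, map_pow, constantCoeff_X, zero_pow (Nat.mul_pos (by omega) (by omega)).ne']
  ring

lemma Pa_ne_zero (δ r : ℕ) (hδ : 1 ≤ δ) : Pa δ r ≠ 0 := by
  intro h
  have := constantCoeff_Pa δ r hδ
  rw [h, map_zero] at this
  norm_num at this

/-- product formula: qb (a+b) b * Pa 2 a * Pa 2 b = Pa 2 (a+b) -/
lemma qb_prodform : ∀ b a : ℕ, qb (a + b) b * Pa 2 a * Pa 2 b = Pa 2 (a + b) := by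
  intro b
  induction b with
  | zero => intro a; simp
  | succ k ihb =>
    intro a
    induction a with
    | zero => simp
    | succ a iha =>
      have e1 : a + 1 + (k + 1) = (a + k + 1) + 1 := by omega
      rw [e1, qb_succ_succ, add_mul, add_mul]
      have t1 : qb (a + k + 1) k * Pa 2 (a + 1) * Pa 2 (k + 1)
          = Pa 2 (a + k + 1) * (1 - XX ^ (2 * (k + 1))) := by
        rw [Pa_succ 2 k]
        have := ihb (a + 1)
        rw [show a + 1 + k = a + k + 1 by omega] at this
        calc qb (a + k + 1) k * Pa 2 (a + 1) * (Pa 2 k * (1 - XX ^ (2 * (k + 1))))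
            = (qb (a + k + 1) k * Pa 2 (a + 1) * Pa 2 k) * (1 - XX ^ (2 * (k + 1))) := by ring
          _ = Pa 2 (a + k + 1) * (1 - XX ^ (2 * (k + 1))) := by rw [this]
      have t2 : XX ^ (2 * (k + 1)) * qb (a + k + 1) (k + 1) * Pa 2 (a + 1) * Pa 2 (k + 1)
          = XX ^ (2 * (k + 1)) * (1 - XX ^ (2 * (a + 1))) * Pa 2 (a + k + 1) := by
        rw [Pa_succ 2 a]
        have := iha
        calc XX ^ (2 * (k + 1)) * qb (a + k + 1) (k + 1) * (Pa 2 a * (1 - XX ^ (2 * (a + 1)))) * Pa 2 (k + 1)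
            = XX ^ (2 * (k + 1)) * (1 - XX ^ (2 * (a + 1))) * (qb (a + (k + 1)) (k + 1) * Pa 2 a * Pa 2 (k + 1)) := by
              rw [show a + (k+1) = a + k + 1 by omega]; ring
          _ = XX ^ (2 * (k + 1)) * (1 - XX ^ (2 * (a + 1))) * Pa 2 (a + (k + 1)) := by rw [iha]
          _ = XX ^ (2 * (k + 1)) * (1 - XX ^ (2 * (a + 1))) * Pa 2 (a + k + 1) := by
              rw [show a + (k+1) = a + k + 1 by omega]
      rw [t1, t2, Pa_succ 2 (a + k + 1)]
      have hx : XX ^ (2 * (k + 1)) * XX ^ (2 * (a + 1)) = XX ^ (2 * (a + k + 1 + 1)) := by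
        rw [← pow_add]; congr 1; omega
      calc Pa 2 (a + k + 1) * (1 - XX ^ (2 * (k + 1)))
            + XX ^ (2 * (k + 1)) * (1 - XX ^ (2 * (a + 1))) * Pa 2 (a + k + 1)
          = Pa 2 (a + k + 1) * (1 - XX ^ (2 * (k + 1)) * XX ^ (2 * (a + 1))) := by ring
        _ = Pa 2 (a + k + 1) * (1 - XX ^ (2 * (a + k + 1 + 1))) := by rw [hx]

-- second Pascal rule
lemma qb_pascal2 (n k : ℕ) :
    qb (n + 1) (k + 1) = XX ^ (2 * (n - k)) * qb n k + qb n (k + 1) := by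
  rcases lt_trichotomy k n with h | rfl | h
  · -- k < n; write n = k + 1 + c
    obtain ⟨c, rfl⟩ : ∃ c, n = c + (k + 1) := ⟨n - k - 1, by omega⟩
    -- key : (1 - XX^(2*(c+1))) * qb n k = (1 - XX^(2*(k+1))) * qb n (k+1)
    have key : (1 - XX ^ (2 * (c + 1))) * qb (c + (k + 1)) k
        = (1 - XX ^ (2 * (k + 1))) * qb (c + (k + 1)) (k + 1) := by
      have h1 := qb_prodform k (c + 1)
      have h2 := qb_prodform (k + 1) c
      rw [show c + 1 + k = c + (k+1) by omega] at h1
      rw [Pa_succ 2 c] at h1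
      rw [Pa_succ 2 k] at h2
      have h3 : Pa 2 (c + 1 + k) = Pa 2 (c + (k + 1)) := by
        rw [show c + 1 + k = c + (k+1) by omega]
      apply mul_right_cancel₀ (mul_ne_zero (Pa_ne_zero 2 c (by omega)) (Pa_ne_zero 2 k (by omega)))
      calc (1 - XX ^ (2 * (c + 1))) * qb (c + (k + 1)) k * (Pa 2 c * Pa 2 k)
          = qb (c + (k + 1)) k * (Pa 2 c * (1 - XX ^ (2 * (c + 1)))) * Pa 2 k := by ring
        _ = Pa 2 (c + (k + 1)) := by rw [h1]
        _ = qb (c + (k + 1)) (k + 1) * Pa 2 c * (Pa 2 k * (1 - XX ^ (2 * (k + 1)))) := by rw [← h2]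
        _ = (1 - XX ^ (2 * (k + 1))) * qb (c + (k + 1)) (k + 1) * (Pa 2 c * Pa 2 k) := by ring
    rw [qb_succ_succ]
    rw [show c + (k + 1) - k = c + 1 by omega]
    linear_combination key
  · rw [qb_succ_succ, qb_diag, qb_overflow k (k + 1) (by omega), Nat.sub_self]
    simp
  · rw [qb_overflow n k (by omega), qb_overflow n (k + 1) (by omega),
      qb_overflow (n + 1) (k + 1) (by omega)]
    simp

-- four-term recurrences
lemma qb_rec1 (N : ℕ) :
    qb (2 * N + 2) 1 = (1 + XX ^ (4 * N + 2)) * qb (2 * N) 0 + XX ^ 2 * qb (2 * N) 1 := by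
  have d1 : qb (2 * N + 2) 1 = qb (2 * N + 1) 0 + XX ^ (2 * 1) * qb (2 * N + 1) 1 :=
    qb_succ_succ (2 * N + 1) 0
  have d2 : qb (2 * N + 1) 1 = XX ^ (2 * (2 * N - 0)) * qb (2 * N) 0 + qb (2 * N) 1 :=
    qb_pascal2 (2 * N) 0
  rw [d1, d2, qb_zero, qb_zero]
  rw [show 2 * (2 * N - 0) = 4 * N by omega]
  rw [show (2 : ℕ) * 1 = 2 by omega]
  have : XX ^ 2 * XX ^ (4 * N) = XX ^ (4 * N + 2) := by rw [← pow_add]; congr 1; omega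
  linear_combination this

lemma qb_reck (N k : ℕ) :
    qb (2 * N + 2) (k + 2) = XX ^ (2 * (2 * N - k)) * qb (2 * N) k
      + (1 + XX ^ (4 * N + 2)) * qb (2 * N) (k + 1) + XX ^ (2 * (k + 2)) * qb (2 * N) (k + 2) := by
  rcases lt_trichotomy k (2 * N) with h | rfl | h
  · have d1 : qb (2 * N + 2) (k + 2) = qb (2 * N + 1) (k + 1)
        + XX ^ (2 * (k + 2)) * qb (2 * N + 1) (k + 2) := qb_succ_succ (2 * N + 1) (k + 1)
    have d2 := qb_pascal2 (2 * N) k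
    have d3 := qb_pascal2 (2 * N) (k + 1)
    rw [d1, d2, d3]
    have hx : XX ^ (2 * (k + 2)) * XX ^ (2 * (2 * N - (k + 1))) = XX ^ (4 * N + 2) := by
      rw [← pow_add]; congr 1; omega
    calc XX ^ (2 * (2 * N - k)) * qb (2 * N) k + qb (2 * N) (k + 1)
          + XX ^ (2 * (k + 2)) * (XX ^ (2 * (2 * N - (k + 1))) * qb (2 * N) (k + 1) + qb (2 * N) (k + 2))
        = XX ^ (2 * (2 * N - k)) * qb (2 * N) k
          + (1 + XX ^ (2 * (k + 2)) * XX ^ (2 * (2 * N - (k + 1)))) * qb (2 * N) (k + 1)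
          + XX ^ (2 * (k + 2)) * qb (2 * N) (k + 2) := by ring
      _ = _ := by rw [hx]
  · rw [Nat.sub_self, qb_diag, qb_diag, qb_overflow (2 * N) (2 * N + 1) (by omega),
      qb_overflow (2 * N) (2 * N + 2) (by omega)]
    simp
  · rw [qb_overflow (2 * N) k (by omega), qb_overflow (2 * N) (k + 1) (by omega),
      qb_overflow (2 * N) (k + 2) (by omega), qb_overflow (2 * N + 2) (k + 2) (by omega)]
    simp

def eF (N k : ℕ) : ℕ := (N - k) * (N - k) + (k - N) * (k - N)
def gF (N k : ℕ) : ℕ := (k - N) * (k - N + 1) + (N - k) * (N - k - 1)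

lemma e_int (N k : ℕ) : (eF N k : ℤ) = ((N : ℤ) - k) ^ 2 := by
  rcases le_total k N with h | h
  · have h0 : k - N = 0 := Nat.sub_eq_zero_of_le h
    unfold eF; rw [h0]; push_cast [Nat.cast_sub h]; ring
  · have h0 : N - k = 0 := Nat.sub_eq_zero_of_le h
    unfold eF; rw [h0]; push_cast [Nat.cast_sub h]; ring

lemma g_int (N k : ℕ) : (gF N k : ℤ) = ((N : ℤ) - k) ^ 2 + k - N := by
  rcases le_total k N with h | h
  · have h0 : k - N = 0 := Nat.sub_eq_zero_of_le h
    unfold gF; rw [h0]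
    rcases Nat.eq_zero_or_pos (N - k) with h1 | h1
    · have : N = k := by omega
      subst this; simp
    · push_cast [Nat.cast_sub h, Nat.cast_sub (by omega : 1 ≤ N - k)]
      push_cast [Nat.cast_sub h]
      ring
  · have h0 : N - k = 0 := Nat.sub_eq_zero_of_le h
    unfold gF; rw [h0]; push_cast [Nat.cast_sub h]; ring

lemma e_g (N k : ℕ) : eF N k + k = gF N k + N := by
  have : ((eF N k + k : ℕ) : ℤ) = ((gF N k + N : ℕ) : ℤ) := by
    push_cast [e_int, g_int]; ring
  exact_mod_cast this

def qq (N k : ℕ) : R := qb (2 * N) k * XX ^ (eF N k + k)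

lemma PK0 (N : ℕ) : qq (N + 1) 0 = qq N 0 * XX ^ (2 * N + 1) := by
  unfold qq
  rw [show 2 * (N + 1) = 2 * N + 2 by ring, qb_zero, qb_zero]
  have eA : eF (N + 1) 0 + 0 = (eF N 0 + 0) + (2 * N + 1) := by
    have : ((eF (N + 1) 0 + 0 : ℕ) : ℤ) = (((eF N 0 + 0) + (2 * N + 1) : ℕ) : ℤ) := by
      push_cast [e_int]; ring
    exact_mod_cast this
  rw [eA, pow_add]; ring

lemma PK1 (N : ℕ) : qq (N + 1) 1
    = qq N 0 * (XX + XX ^ (4 * N + 3)) + qq N 1 * XX ^ (2 * N + 1) := by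
  unfold qq
  rw [show 2 * (N + 1) = 2 * N + 2 by ring, qb_rec1, qb_zero]
  have eA : (eF N 0 + 0) + 1 = eF (N + 1) 1 + 1 := by
    have : (((eF N 0 + 0) + 1 : ℕ) : ℤ) = ((eF (N + 1) 1 + 1 : ℕ) : ℤ) := by
      push_cast [e_int]; ring
    exact_mod_cast this
  have eB : (eF N 0 + 0) + (4 * N + 3) = (eF (N + 1) 1 + 1) + (4 * N + 2) := by
    have : (((eF N 0 + 0) + (4 * N + 3) : ℕ) : ℤ)
        = (((eF (N + 1) 1 + 1) + (4 * N + 2) : ℕ) : ℤ) := by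
      push_cast [e_int]; ring
    exact_mod_cast this
  have eC : (eF N 1 + 1) + (2 * N + 1) = (eF (N + 1) 1 + 1) + 2 := by
    have : (((eF N 1 + 1) + (2 * N + 1) : ℕ) : ℤ) = (((eF (N + 1) 1 + 1) + 2 : ℕ) : ℤ) := by
      push_cast [e_int]; ring
    exact_mod_cast this
  have h1 : (1 : R) * XX ^ (eF N 0 + 0) * (XX + XX ^ (4 * N + 3))
      = XX ^ ((eF N 0 + 0) + 1) + XX ^ ((eF N 0 + 0) + (4 * N + 3)) := by ring
  have h2 : qb (2 * N) 1 * XX ^ (eF N 1 + 1) * XX ^ (2 * N + 1)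
      = qb (2 * N) 1 * XX ^ ((eF N 1 + 1) + (2 * N + 1)) := by ring
  rw [h1, h2, eA, eB, eC]
  ring


lemma PKk (N k : ℕ) (hk : k ≤ 2 * N) : qq (N + 1) (k + 2)
    = qq N k * XX ^ (2 * N + 3) + qq N (k + 1) * (XX + XX ^ (4 * N + 3))
      + qq N (k + 2) * XX ^ (2 * N + 1) := by
  unfold qq
  rw [show 2 * (N + 1) = 2 * N + 2 by ring, qb_reck]
  have eA : (eF (N + 1) (k + 2) + (k + 2)) + 2 * (2 * N - k) = (eF N k + k) + (2 * N + 3) := by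
    have : (((eF (N + 1) (k + 2) + (k + 2)) + 2 * (2 * N - k) : ℕ) : ℤ)
        = (((eF N k + k) + (2 * N + 3) : ℕ) : ℤ) := by
      push_cast [e_int, Nat.cast_sub hk]; ring
    exact_mod_cast this
  have eB : eF (N + 1) (k + 2) + (k + 2) = (eF N (k + 1) + (k + 1)) + 1 := by
    have : ((eF (N + 1) (k + 2) + (k + 2) : ℕ) : ℤ)
        = (((eF N (k + 1) + (k + 1)) + 1 : ℕ) : ℤ) := by
      push_cast [e_int]; ring
    exact_mod_cast this
  have eC : (eF (N + 1) (k + 2) + (k + 2)) + 2 * (k + 2)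
      = (eF N (k + 2) + (k + 2)) + (2 * N + 1) := by
    have : (((eF (N + 1) (k + 2) + (k + 2)) + 2 * (k + 2) : ℕ) : ℤ)
        = (((eF N (k + 2) + (k + 2)) + (2 * N + 1) : ℕ) : ℤ) := by
      push_cast [e_int]; ring
    exact_mod_cast this
  calc (XX ^ (2 * (2 * N - k)) * qb (2 * N) k + (1 + XX ^ (4 * N + 2)) * qb (2 * N) (k + 1)
        + XX ^ (2 * (k + 2)) * qb (2 * N) (k + 2)) * XX ^ (eF (N + 1) (k + 2) + (k + 2))
      = qb (2 * N) k * XX ^ ((eF (N + 1) (k + 2) + (k + 2)) + 2 * (2 * N - k))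
        + qb (2 * N) (k + 1) * (XX ^ (eF (N + 1) (k + 2) + (k + 2))
            + XX ^ ((eF (N + 1) (k + 2) + (k + 2)) + (4 * N + 2)))
        + qb (2 * N) (k + 2) * XX ^ ((eF (N + 1) (k + 2) + (k + 2)) + 2 * (k + 2)) := by
        ring
    _ = qb (2 * N) k * XX ^ ((eF N k + k) + (2 * N + 3))
        + qb (2 * N) (k + 1) * (XX ^ ((eF N (k + 1) + (k + 1)) + 1)
            + XX ^ (((eF N (k + 1) + (k + 1)) + 1) + (4 * N + 2)))
        + qb (2 * N) (k + 2) * XX ^ ((eF N (k + 2) + (k + 2)) + (2 * N + 1)) := by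
        rw [eA, eC, eB]
    _ = _ := by
        rw [show (eF N (k+1) + (k+1)) + 1 + (4 * N + 2) = (eF N (k+1) + (k+1)) + (4 * N + 3) by omega]
        ring

lemma qq_overflow (N k : ℕ) (h : 2 * N < k) : qq N k = 0 := by
  unfold qq; rw [qb_overflow _ _ h]; ring

def SSum (N : ℕ) : R := ∑ k ∈ range (2 * N + 1), qq N k

lemma sum_shift1 (g : ℕ → R) (n : ℕ) (h : g (n + 1) = 0) :
    (∑ k ∈ range (n + 1), g (k + 1)) + g 0 = ∑ k ∈ range (n + 1), g k := by
  rw [← Finset.sum_range_succ' g (n + 1), Finset.sum_range_succ g (n + 1), h, add_zero]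

lemma sum_shift2 (g : ℕ → R) (n : ℕ) (h1 : g (n + 1) = 0) (h2 : g (n + 2) = 0) :
    (∑ k ∈ range (n + 1), g (k + 2)) + g 1 + g 0 = ∑ k ∈ range (n + 1), g k := by
  have step1 := sum_shift1 (fun k => g (k + 1)) n (by simpa using h2)
  calc (∑ k ∈ range (n + 1), g (k + 2)) + g 1 + g 0
      = ((∑ k ∈ range (n + 1), (fun k => g (k + 1)) (k + 1)) + (fun k => g (k+1)) 0) + g 0 := rfl
    _ = (∑ k ∈ range (n + 1), g (k + 1)) + g 0 := by rw [step1]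
    _ = _ := sum_shift1 g n h1

lemma SUMSTEP (N : ℕ) : SSum (N + 1)
    = SSum N * (XX + XX ^ (2 * N + 1) + XX ^ (2 * N + 3) + XX ^ (4 * N + 3)) := by
  have h0 : SSum (N + 1) = (∑ k ∈ range (2 * N + 1), qq (N + 1) (k + 2))
      + qq (N + 1) 1 + qq (N + 1) 0 := by
    unfold SSum
    rw [show 2 * (N + 1) + 1 = (2 * N + 1) + 1 + 1 by ring]
    rw [Finset.sum_range_succ' (fun k => qq (N + 1) k) (2 * N + 1 + 1)]
    rw [Finset.sum_range_succ' (fun k => qq (N + 1) (k + 1)) (2 * N + 1)]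
  have hterm : ∀ k ∈ range (2 * N + 1), qq (N + 1) (k + 2)
      = qq N k * XX ^ (2 * N + 3) + qq N (k + 1) * (XX + XX ^ (4 * N + 3))
        + qq N (k + 2) * XX ^ (2 * N + 1) := by
    intro k hk
    exact PKk N k (by have := mem_range.mp hk; omega)
  rw [h0, Finset.sum_congr rfl hterm, PK1, PK0]
  rw [Finset.sum_add_distrib, Finset.sum_add_distrib]
  have hs2 : (∑ k ∈ range (2 * N + 1), qq N (k + 1) * (XX + XX ^ (4 * N + 3)))
      + qq N 0 * (XX + XX ^ (4 * N + 3))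
      = ∑ k ∈ range (2 * N + 1), qq N k * (XX + XX ^ (4 * N + 3)) :=
    sum_shift1 (fun k => qq N k * (XX + XX ^ (4 * N + 3))) (2 * N)
      (by simp [qq_overflow N (2 * N + 1) (by omega)])
  have hs3 : (∑ k ∈ range (2 * N + 1), qq N (k + 2) * XX ^ (2 * N + 1))
      + qq N 1 * XX ^ (2 * N + 1) + qq N 0 * XX ^ (2 * N + 1)
      = ∑ k ∈ range (2 * N + 1), qq N k * XX ^ (2 * N + 1) :=
    sum_shift2 (fun k => qq N k * XX ^ (2 * N + 1)) (2 * N)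
      (by simp [qq_overflow N (2 * N + 1) (by omega)])
      (by simp [qq_overflow N (2 * N + 2) (by omega)])
  rw [← Finset.sum_mul, ← Finset.sum_mul, ← Finset.sum_mul] at *
  unfold SSum
  linear_combination hs2 + hs3
    + (Finset.sum_mul (range (2*N+1)) (fun k => qq N k) (XX + XX ^ (2 * N + 1) + XX ^ (2 * N + 3) + XX ^ (4 * N + 3))) * 0

lemma MACH : ∀ N : ℕ, SSum (N + 1) = XX ^ (N + 1) * (2 * Na 2 N * Na 2 (N + 1)) := by
  intro N
  induction N with
  | zero =>
    rw [SUMSTEP 0]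
    have h1 : SSum 0 = 1 := by
      unfold SSum
      rw [show 2 * 0 + 1 = 1 by ring, Finset.sum_range_one]
      unfold qq eF
      simp [qb_zero]
    rw [h1, Na_succ, Na_zero]
    norm_num
    ring
  | succ N ih =>
    rw [SUMSTEP (N + 1), ih, Na_succ 2 (N + 1), Na_succ 2 N]
    ring

lemma SSP (N : ℕ) : 2 * Na 2 N * Na 2 (N + 1)
    = ∑ k ∈ range (2 * (N + 1) + 1), qb (2 * (N + 1)) k * XX ^ (gF (N + 1) k) := by
  have h := MACH N
  have h2 : SSum (N + 1)
      = XX ^ (N + 1) * ∑ k ∈ range (2 * (N + 1) + 1), qb (2 * (N + 1)) k * XX ^ (gF (N + 1) k) := by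
    unfold SSum qq
    rw [Finset.mul_sum]
    refine Finset.sum_congr rfl fun k hk => ?_
    rw [e_g (N + 1) k, pow_add]
    ring
  rw [h2] at h
  exact (mul_left_cancel₀ (pow_ne_zero _ PowerSeries.X_ne_zero) h).symm

-- congruence helpers
lemma coeff_eq_of_dvd {A B : R} {c r : ℕ} (h : XX ^ c ∣ A - B) (hr : r < c) :
    coeff (R := ℤ) r A = coeff (R := ℤ) r B := by
  have h0 : coeff (R := ℤ) r (A - B) = 0 := by
    rw [PowerSeries.X_pow_dvd_iff] at h
    exact h r hr
  rw [map_sub] at h0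
  linarith [h0]

lemma dvd_of_coeff_eq {A B : R} {c : ℕ} (h : ∀ r, r < c → coeff (R := ℤ) r A = coeff (R := ℤ) r B) :
    XX ^ c ∣ A - B := by
  rw [PowerSeries.X_pow_dvd_iff]
  intro r hr
  rw [map_sub, h r hr, sub_self]

lemma prod_sub_one_dvd {c : ℕ} {s : Finset ℕ} {f : ℕ → R}
    (h : ∀ n ∈ s, XX ^ c ∣ f n - 1) : XX ^ c ∣ (∏ n ∈ s, f n) - 1 := by
  classical
  induction s using Finset.cons_induction with
  | empty => simp
  | cons a s ha ih =>
    rw [Finset.prod_cons]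
    have h1 : XX ^ c ∣ f a - 1 := h a (Finset.mem_cons_self a s)
    have h2 : XX ^ c ∣ (∏ n ∈ s, f n) - 1 := ih fun n hn => h n (Finset.mem_cons_of_mem hn)
    have : f a * ∏ n ∈ s, f n - 1
        = (f a - 1) * ∏ n ∈ s, f n + ((∏ n ∈ s, f n) - 1) := by ring
    rw [this]
    exact dvd_add (h1.mul_right _) h2

lemma one_sub_pow_dvd {c d : ℕ} (h : c ≤ d) : XX ^ c ∣ (1 - XX ^ d : R) - 1 := by
  have : (1 - XX ^ d : R) - 1 = -(XX ^ d) := by ring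
  rw [this]
  exact (pow_dvd_pow XX h).neg_right

lemma one_add_pow_dvd {c d : ℕ} (h : c ≤ d) : XX ^ c ∣ (1 + XX ^ d : R) - 1 := by
  have : (1 + XX ^ d : R) - 1 = XX ^ d := by ring
  rw [this]
  exact pow_dvd_pow XX h

lemma cancel_two {c : ℕ} {f : R} (h : XX ^ c ∣ 2 * f) : XX ^ c ∣ f := by
  rw [PowerSeries.X_pow_dvd_iff] at h ⊢
  intro m hm
  have := h m hm
  rw [two_mul, map_add] at this
  omega

-- splitting products over Icc
lemma Pa_split (δ a b : ℕ) (hab : a ≤ b) :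
    Pa δ b = Pa δ a * ∏ n ∈ Ioc a b, (1 - XX ^ (δ * n)) := by
  unfold Pa
  have hicc : ∀ r : ℕ, Icc 1 r = Ioc 0 r := by intro r; ext x; simp; omega
  rw [hicc, hicc, ← Finset.prod_Ioc_consecutive _ (Nat.zero_le a) hab]

lemma Na_split (δ a b : ℕ) (hab : a ≤ b) :
    Na δ b = Na δ a * ∏ n ∈ Ioc a b, (1 + XX ^ (δ * n)) := by
  unfold Na
  have hicc : ∀ r : ℕ, Icc 1 r = Ioc 0 r := by intro r; ext x; simp; omega
  rw [hicc, hicc, ← Finset.prod_Ioc_consecutive _ (Nat.zero_le a) hab]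

lemma qb_Pa (a k : ℕ) :
    qb (a + k) k * Pa 2 k = ∏ n ∈ Ioc a (a + k), (1 - XX ^ (2 * n)) := by
  have h := qb_prodform k a
  have hsplit := Pa_split 2 a (a + k) (by omega)
  apply mul_left_cancel₀ (Pa_ne_zero 2 a (by omega))
  calc Pa 2 a * (qb (a + k) k * Pa 2 k) = qb (a + k) k * Pa 2 a * Pa 2 k := by ring
    _ = Pa 2 (a + k) := h
    _ = Pa 2 a * ∏ n ∈ Ioc a (a + k), (1 - XX ^ (2 * n)) := hsplit

lemma int_quad1 (d : ℤ) : 0 ≤ d ^ 2 - 3 * d + 2 := by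
  rcases le_or_gt d 1 with h | h
  · nlinarith [mul_nonneg (by linarith : (0:ℤ) ≤ 1 - d) (by linarith : (0:ℤ) ≤ 2 - d)]
  · nlinarith [mul_nonneg (by linarith : (0:ℤ) ≤ d - 1) (by linarith : (0:ℤ) ≤ d - 2)]

lemma int_quad2 (d : ℤ) : 0 ≤ d ^ 2 + d := by
  rcases le_or_gt 0 d with h | h
  · nlinarith
  · nlinarith [mul_nonneg (by linarith : (0:ℤ) ≤ -d) (by linarith : (0:ℤ) ≤ -d - 1)]

lemma gF_ineq1 (M k : ℕ) : 2 * M ≤ gF M k + (2 * k + 2) := by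
  have hg := g_int M k
  have h1 := int_quad1 ((M : ℤ) - k)
  have : (2 * M : ℤ) ≤ (gF M k : ℤ) + (2 * k + 2) := by
    rw [hg]; nlinarith
  exact_mod_cast this

lemma gF_ineq2 (M k : ℕ) (hk : k ≤ 2 * M) : 2 * M ≤ gF M k + (2 * (2 * M - k) + 2) := by
  have hg := g_int M k
  have h1 := int_quad2 ((M : ℤ) - k)
  have : (2 * M : ℤ) ≤ (gF M k : ℤ) + (2 * ((2 * M : ℕ) - (k : ℕ) : ℕ) + 2) := by
    rw [hg, Nat.cast_sub hk]; push_cast; nlinarith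
  exact_mod_cast this

lemma mul_sub_one_dvd {c : ℕ} {A B : R} (hA : XX ^ c ∣ A - 1) (hB : XX ^ c ∣ B - 1) :
    XX ^ c ∣ A * B - 1 := by
  have : A * B - 1 = (A - 1) * B + (B - 1) := by ring
  rw [this]
  exact dvd_add (hA.mul_right _) hB

lemma trunc_k (M k : ℕ) (hk : k ≤ 2 * M) :
    XX ^ (2 * M) ∣ qb (2 * M) k * XX ^ (gF M k) * Pa 2 (2 * M) - XX ^ (gF M k) := by
  obtain ⟨a, ha⟩ : ∃ a, 2 * M = a + k := ⟨2 * M - k, by omega⟩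
  have hqp : qb (2 * M) k * Pa 2 k = ∏ n ∈ Ioc a (2 * M), (1 - XX ^ (2 * n)) := by
    rw [ha]; exact qb_Pa a k
  have hsplit : Pa 2 (2 * M) = Pa 2 k * ∏ n ∈ Ioc k (2 * M), (1 - XX ^ (2 * n)) :=
    Pa_split 2 k (2 * M) hk
  have key : qb (2 * M) k * XX ^ (gF M k) * Pa 2 (2 * M) - XX ^ (gF M k)
      = XX ^ (gF M k) * ((∏ n ∈ Ioc a (2 * M), (1 - XX ^ (2 * n)))
          * (∏ n ∈ Ioc k (2 * M), (1 - XX ^ (2 * n))) - 1) := by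
    rw [hsplit, ← hqp]; ring
  rw [key]
  rcases le_or_gt (2 * M) (gF M k) with h | h
  · exact Dvd.dvd.mul_right (pow_dvd_pow XX h) _
  · have hsum : gF M k + (2 * M - gF M k) = 2 * M := by omega
    rw [← hsum, pow_add]
    refine mul_dvd_mul_left _ (mul_sub_one_dvd ?_ ?_)
    · refine prod_sub_one_dvd fun n hn => one_sub_pow_dvd ?_
      have hn1 : a + 1 ≤ n := (Finset.mem_Ioc.mp hn).1
      have := gF_ineq2 M k hk
      omega
    · refine prod_sub_one_dvd fun n hn => one_sub_pow_dvd ?_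
      have hn1 : k + 1 ≤ n := (Finset.mem_Ioc.mp hn).1
      have := gF_ineq1 M k
      omega

lemma trunc_sum (M : ℕ) :
    XX ^ (2 * M) ∣ (∑ k ∈ range (2 * M + 1), qb (2 * M) k * XX ^ (gF M k)) * Pa 2 (2 * M)
      - ∑ k ∈ range (2 * M + 1), XX ^ (gF M k) := by
  rw [Finset.sum_mul, ← Finset.sum_sub_distrib]
  exact Finset.dvd_sum fun k hk => trunc_k M k (by have := mem_range.mp hk; omega)

lemma pair_sum (M : ℕ) : ∑ k ∈ range (2 * M + 1), (XX : R) ^ (gF M k)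
    = 2 * (∑ j ∈ range M, XX ^ (j * j + j)) + XX ^ (M * M + M) := by
  have hsplit : ∑ k ∈ range (2 * M + 1), (XX : R) ^ gF M k
      = (∑ k ∈ range M, (XX : R) ^ gF M k) + ∑ k ∈ Ico M (2 * M + 1), (XX : R) ^ gF M k := by
    rw [Finset.range_eq_Ico, ← Finset.sum_Ico_consecutive _ (Nat.zero_le M) (by omega : M ≤ 2 * M + 1),
      ← Finset.range_eq_Ico]
  have hg1 : ∀ j : ℕ, gF M (M + j) = j * j + j := by
    intro j
    unfold gF
    rw [Nat.add_sub_cancel_left, Nat.sub_eq_zero_of_le (Nat.le_add_right M j)]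
    ring
  have hg2 : ∀ j : ℕ, j < M → gF M (M - 1 - j) = j * j + j := by
    intro j hj
    unfold gF
    rw [Nat.sub_eq_zero_of_le (by omega : M - 1 - j ≤ M),
      show M - (M - 1 - j) = j + 1 by omega]
    simp
    ring
  have h2 : ∑ k ∈ Ico M (2 * M + 1), (XX : R) ^ gF M k
      = ∑ j ∈ range (M + 1), (XX : R) ^ (j * j + j) := by
    rw [Finset.sum_Ico_eq_sum_range, show 2 * M + 1 - M = M + 1 by omega]
    exact Finset.sum_congr rfl fun j _ => by rw [hg1 j]
  have h1 : ∑ k ∈ range M, (XX : R) ^ gF M k = ∑ j ∈ range M, (XX : R) ^ (j * j + j) := by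
    rw [← Finset.sum_range_reflect (fun k => (XX : R) ^ gF M k) M]
    exact Finset.sum_congr rfl fun j hj => by rw [hg2 j (mem_range.mp hj)]
  rw [hsplit, h1, h2, Finset.sum_range_succ]
  ring

lemma EVEN (N : ℕ) :
    XX ^ (2 * N + 2) ∣ Na 2 (2 * N + 2) * Na 2 (2 * N + 2) * Pa 2 (2 * N + 2)
      - ∑ j ∈ range (N + 1), XX ^ (j * j + j) := by
  set M := N + 1 with hM
  have h2M : 2 * M = 2 * N + 2 := by omega
  have hssp := SSP N
  have htr := trunc_sum M
  have hpair := pair_sum M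
  -- X^(2M) ∣ 2·NaN·Na(N+1)·Pa2(2M) − (2 ψ̃₂ + X^(M²+M))
  have hd1 : XX ^ (2 * M) ∣ 2 * Na 2 N * Na 2 M * Pa 2 (2 * M)
      - (2 * (∑ j ∈ range M, XX ^ (j * j + j)) + XX ^ (M * M + M)) := by
    rw [show (2 : R) * Na 2 N * Na 2 M * Pa 2 (2 * M)
        = (2 * Na 2 N * Na 2 M) * Pa 2 (2 * M) by ring, hssp, ← hpair]
    rw [show 2 * (N + 1) = 2 * M by omega]
    exact htr
  have hd2 : XX ^ (2 * M) ∣ (XX : R) ^ (M * M + M) := by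
    apply pow_dvd_pow
    have : M ≤ M * M := Nat.le_mul_of_pos_left M (by omega)
    omega
  have hd3 : XX ^ (2 * M) ∣ 2 * (Na 2 N * Na 2 M * Pa 2 (2 * M)
      - ∑ j ∈ range M, XX ^ (j * j + j)) := by
    have := dvd_add hd1 hd2
    have heq : 2 * Na 2 N * Na 2 M * Pa 2 (2 * M)
        - (2 * (∑ j ∈ range M, XX ^ (j * j + j)) + XX ^ (M * M + M)) + XX ^ (M * M + M)
        = 2 * (Na 2 N * Na 2 M * Pa 2 (2 * M) - ∑ j ∈ range M, XX ^ (j * j + j)) := by ring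
    rwa [heq] at this
  have hd4 := cancel_two hd3
  -- replace Na 2 N * Na 2 M by Na 2 (2M)^2
  have hA := Na_split 2 N (2 * M) (by omega)
  have hB := Na_split 2 M (2 * M) (by omega)
  have hdA : XX ^ (2 * M) ∣ (∏ n ∈ Ioc N (2 * M), (1 + XX ^ (2 * n))) - 1 := by
    refine prod_sub_one_dvd fun n hn => one_add_pow_dvd ?_
    have := (Finset.mem_Ioc.mp hn).1
    omega
  have hdB : XX ^ (2 * M) ∣ (∏ n ∈ Ioc M (2 * M), (1 + XX ^ (2 * n))) - 1 := by
    refine prod_sub_one_dvd fun n hn => one_add_pow_dvd ?_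
    have := (Finset.mem_Ioc.mp hn).1
    omega
  have hd5 : XX ^ (2 * M) ∣ Na 2 (2 * M) * Na 2 (2 * M) * Pa 2 (2 * M)
      - Na 2 N * Na 2 M * Pa 2 (2 * M) := by
    have heq : Na 2 (2 * M) * Na 2 (2 * M) * Pa 2 (2 * M)
        - Na 2 N * Na 2 M * Pa 2 (2 * M)
        = (Na 2 N * Na 2 M * Pa 2 (2 * M))
          * ((∏ n ∈ Ioc N (2 * M), (1 + XX ^ (2 * n)))
              * (∏ n ∈ Ioc M (2 * M), (1 + XX ^ (2 * n))) - 1) := by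
      nth_rewrite 1 [hA, hB]
      ring
    rw [heq]
    exact Dvd.dvd.mul_left (mul_sub_one_dvd hdA hdB) _
  have := dvd_add hd5 hd4
  rw [sub_add_sub_cancel] at this
  rwa [h2M] at this


/-- The infinite product `∏_{n ≥ 1} (1 - q^{δ n})` in `ℤ[[q]]`: since the factor at
index `n` is `1 + O(q^n)` (for `δ ≥ 1`), the coefficient of `q^m` of the infinite product
equals that of the finite partial product over `1 ≤ n ≤ m`. -/
noncomputable def prodQ (δ : ℕ) : PowerSeries ℤ :=
  PowerSeries.mk fun m =>
    PowerSeries.coeff (R := ℤ) m (∏ n ∈ Finset.Icc 1 m, (1 - PowerSeries.X ^ (δ * n)))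

lemma coeff_prod_expand {ι : Type} [DecidableEq ι] (s : Finset ι) (ε : ι → ℤ) (w : ι → ℕ)
    (c : ℕ) :
    coeff (R := ℤ) c (∏ i ∈ s, (1 + PowerSeries.C (R := ℤ) (ε i) * XX ^ (w i)))
      = ∑ t ∈ s.powerset, (if ∑ i ∈ t, w i = c then ∏ i ∈ t, ε i else 0) := by
  have hprod : ∏ i ∈ s, ((1 : R) + PowerSeries.C (R := ℤ) (ε i) * XX ^ w i)
      = ∑ t ∈ s.powerset, PowerSeries.C (R := ℤ) (∏ i ∈ t, ε i) * XX ^ (∑ i ∈ t, w i) := by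
    rw [Finset.prod_congr rfl fun i _ => add_comm (1 : R) (PowerSeries.C (R := ℤ) (ε i) * XX ^ w i)]
    rw [Finset.prod_add]
    refine Finset.sum_congr rfl fun t ht => ?_
    rw [Finset.prod_const_one, mul_one, Finset.prod_mul_distrib, ← map_prod,
      Finset.prod_pow_eq_pow_sum]
  rw [hprod, map_sum]
  refine Finset.sum_congr rfl fun t ht => ?_
  rw [PowerSeries.coeff_C_mul, PowerSeries.coeff_X_pow]
  by_cases h : ∑ i ∈ t, w i = c
  · simp [h]
  · rw [if_neg h, if_neg (show ¬(c = ∑ i ∈ t, w i) from fun hc => h hc.symm), mul_zero]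

lemma coeff_double {ι : Type} [DecidableEq ι] (s : Finset ι) (ε : ι → ℤ) (w : ι → ℕ)
    (r : ℕ) :
    coeff (R := ℤ) (2 * r) (∏ i ∈ s, (1 + PowerSeries.C (R := ℤ) (ε i) * XX ^ (2 * w i)))
      = coeff (R := ℤ) r (∏ i ∈ s, (1 + PowerSeries.C (R := ℤ) (ε i) * XX ^ (w i))) := by
  rw [coeff_prod_expand, coeff_prod_expand]
  refine Finset.sum_congr rfl fun t ht => ?_
  rw [← Finset.mul_sum]
  exact if_congr (by omega) rfl rfl

lemma NaPa_form (M d : ℕ) : Na d M * Pa (2 * d) M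
    = ∏ p ∈ (Finset.Icc 1 M) ×ˢ (Finset.univ : Finset Bool),
        (1 + PowerSeries.C (R := ℤ) (if p.2 then 1 else -1)
          * XX ^ (d * (if p.2 then p.1 else 2 * p.1))) := by
  rw [Finset.prod_product]
  unfold Na Pa
  rw [← Finset.prod_mul_distrib]
  refine Finset.prod_congr rfl fun i _ => ?_
  rw [Fintype.prod_bool, if_pos rfl, if_pos rfl, if_neg Bool.false_ne_true,
    if_neg Bool.false_ne_true, map_one, map_neg, map_one]
  ring

lemma NaPa_merge (u M : ℕ) : Na u M * Pa u M = Pa (2 * u) M := by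
  unfold Na Pa
  rw [← Finset.prod_mul_distrib]
  refine Finset.prod_congr rfl fun i _ => ?_
  ring

lemma coeff_NaPa (M r : ℕ) :
    coeff (R := ℤ) (2 * r) (Na 2 M * Pa 4 M) = coeff (R := ℤ) r (Na 1 M * Pa 2 M) := by
  have h2 := NaPa_form M 2
  have h1 := NaPa_form M 1
  rw [show 2 * 2 = 4 by norm_num] at h2
  rw [show 2 * 1 = 2 by norm_num] at h1
  simp only [one_mul] at h1
  have := coeff_double ((Finset.Icc 1 M) ×ˢ (Finset.univ : Finset Bool))
    (fun p => if p.2 then 1 else -1) (fun p => if p.2 then p.1 else 2 * p.1) r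
  rw [h2, h1]
  exact this

lemma psi_double (n r : ℕ) :
    coeff (R := ℤ) (2 * r) (∑ j ∈ range n, (XX : R) ^ (j * j + j))
      = coeff (R := ℤ) r (∑ j ∈ range n, (XX : R) ^ (j * (j + 1) / 2)) := by
  rw [map_sum, map_sum]
  refine Finset.sum_congr rfl fun j _ => ?_
  rw [PowerSeries.coeff_X_pow, PowerSeries.coeff_X_pow]
  have h2 : 2 ∣ j * (j + 1) := (Nat.even_mul_succ_self j).two_dvd
  have hmul : j * (j + 1) = j * j + j := by ring
  exact if_congr (by omega) rfl rfl

lemma ODD (N : ℕ) :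
    XX ^ (N + 1) ∣ Na 1 (2 * N + 2) * Pa 2 (2 * N + 2)
      - ∑ j ∈ range (N + 1), XX ^ (j * (j + 1) / 2) := by
  apply dvd_of_coeff_eq
  intro r hr
  have hmerge : Na 2 (2 * N + 2) * Na 2 (2 * N + 2) * Pa 2 (2 * N + 2)
      = Na 2 (2 * N + 2) * Pa 4 (2 * N + 2) := by
    rw [show (4 : ℕ) = 2 * 2 by norm_num, ← NaPa_merge 2 (2 * N + 2)]
    ring
  have hE : coeff (R := ℤ) (2 * r) (Na 2 (2 * N + 2) * Pa 4 (2 * N + 2))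
      = coeff (R := ℤ) (2 * r) (∑ j ∈ range (N + 1), (XX : R) ^ (j * j + j)) := by
    rw [← hmerge]
    exact coeff_eq_of_dvd (EVEN N) (by omega)
  calc coeff (R := ℤ) r (Na 1 (2 * N + 2) * Pa 2 (2 * N + 2))
      = coeff (R := ℤ) (2 * r) (Na 2 (2 * N + 2) * Pa 4 (2 * N + 2)) := (coeff_NaPa (2 * N + 2) r).symm
    _ = coeff (R := ℤ) (2 * r) (∑ j ∈ range (N + 1), (XX : R) ^ (j * j + j)) := hE
    _ = coeff (R := ℤ) r (∑ j ∈ range (N + 1), (XX : R) ^ (j * (j + 1) / 2)) := psi_double (N + 1) r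

lemma STAB (δ M m : ℕ) (hδ : 1 ≤ δ) (hm : m ≤ M) :
    XX ^ (m + 1) ∣ prodQ δ - Pa δ M := by
  apply dvd_of_coeff_eq
  intro r hr
  have h1 : coeff (R := ℤ) r (prodQ δ) = coeff (R := ℤ) r (Pa δ r) := by
    unfold prodQ
    rw [PowerSeries.coeff_mk]
    rfl
  have h2 : coeff (R := ℤ) r (Pa δ M) = coeff (R := ℤ) r (Pa δ r) := by
    have hsplit := Pa_split δ r M (by omega)
    have hdvd : XX ^ (r + 1) ∣ Pa δ M - Pa δ r := by
      rw [hsplit, show Pa δ r * (∏ n ∈ Ioc r M, (1 - XX ^ (δ * n))) - Pa δ r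
          = Pa δ r * ((∏ n ∈ Ioc r M, (1 - XX ^ (δ * n))) - 1) by ring]
      refine Dvd.dvd.mul_left (prod_sub_one_dvd fun n hn => one_sub_pow_dvd ?_) _
      have hn1 : r + 1 ≤ n := (Finset.mem_Ioc.mp hn).1
      calc r + 1 ≤ n := hn1
        _ = 1 * n := (one_mul n).symm
        _ ≤ δ * n := Nat.mul_le_mul_right n hδ
    exact coeff_eq_of_dvd hdvd (by omega)
  rw [h1, h2]

lemma PSI (m : ℕ) :
    XX ^ (m + 1) ∣ (PowerSeries.mk fun m' =>
        ∑ n ∈ Finset.range (m' + 1), if n * (n + 1) / 2 = m' then (1 : ℤ) else 0)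
      - ∑ j ∈ range (m + 1), XX ^ (j * (j + 1) / 2) := by
  apply dvd_of_coeff_eq
  intro r hr
  rw [PowerSeries.coeff_mk, map_sum]
  have hterm : ∀ j : ℕ, coeff (R := ℤ) r ((XX : R) ^ (j * (j + 1) / 2))
      = if j * (j + 1) / 2 = r then (1 : ℤ) else 0 := by
    intro j
    rw [PowerSeries.coeff_X_pow]
    exact if_congr eq_comm rfl rfl
  rw [Finset.sum_congr rfl fun j _ => hterm j]
  refine Finset.sum_subset ?_ ?_
  · exact Finset.range_subset_range.mpr (by omega)
  intro j hj hj'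
  have hjr : r < j := by
    rcases lt_or_ge r j with h | h
    · exact h
    · exact absurd (Finset.mem_range.mpr (by omega)) hj'
  have h2 : 2 ∣ j * (j + 1) := (Nat.even_mul_succ_self j).two_dvd
  have hmul : j * (j + 1) = j * j + j := by ring
  have hsq : j ≤ j * j := Nat.le_mul_of_pos_left j (by omega)
  have hne : ¬(j * (j + 1) / 2 = r) := by omega
  rw [if_neg hne]

lemma coeff_mul_eq {m : ℕ} {A A' B B' : R} (hA : XX ^ (m + 1) ∣ A - A')
    (hB : XX ^ (m + 1) ∣ B - B') : coeff (R := ℤ) m (A * B) = coeff (R := ℤ) m (A' * B') := by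
  refine coeff_eq_of_dvd (c := m + 1) ?_ (by omega)
  rw [show A * B - A' * B' = (A - A') * B + A' * (B - B') by ring]
  exact dvd_add (hA.mul_right _) (hB.mul_left _)

/-- Ramanujan's theta identity: `ψ(q) · (q;q)_∞ = (q²;q²)_∞²` in `ℤ[[q]]`. -/
theorem stmt4 :
    (PowerSeries.mk fun m =>
        ∑ n ∈ Finset.range (m + 1), if n * (n + 1) / 2 = m then (1 : ℤ) else 0)
      * prodQ 1 = prodQ 2 ^ 2 := by
  apply PowerSeries.ext
  intro m
  set M := 2 * m + 2 with hM
  set psi1 : R := ∑ j ∈ range (m + 1), XX ^ (j * (j + 1) / 2) with hpsi1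
  have hL : coeff (R := ℤ) m ((PowerSeries.mk fun m' =>
        ∑ n ∈ Finset.range (m' + 1), if n * (n + 1) / 2 = m' then (1 : ℤ) else 0)
      * prodQ 1) = coeff (R := ℤ) m (psi1 * Pa 1 M) :=
    coeff_mul_eq (PSI m) (STAB 1 M m (by omega) (by omega))
  have hR : coeff (R := ℤ) m (prodQ 2 ^ 2) = coeff (R := ℤ) m (Pa 2 M * Pa 2 M) := by
    rw [pow_two]
    exact coeff_mul_eq (STAB 2 M m (by omega) (by omega)) (STAB 2 M m (by omega) (by omega))
  have hmid : coeff (R := ℤ) m (psi1 * Pa 1 M) = coeff (R := ℤ) m ((Na 1 M * Pa 2 M) * Pa 1 M) := by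
    refine coeff_mul_eq ?_ (by rw [sub_self]; exact dvd_zero _)
    have := ODD m
    rw [show 2 * m + 2 = M by omega] at this
    rw [show psi1 - Na 1 M * Pa 2 M = -(Na 1 M * Pa 2 M - psi1) by ring]
    exact this.neg_right
  have hfin : (Na 1 M * Pa 2 M) * Pa 1 M = Pa 2 M * Pa 2 M := by
    rw [show Na 1 M * Pa 2 M * Pa 1 M = (Na 1 M * Pa 1 M) * Pa 2 M by ring,
      NaPa_merge 1 M, show 2 * 1 = 2 by norm_num]
  rw [hL, hR, hmid, hfin]

end
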